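/- Let T be a triangle, f ∈ C²(T), q a convex quadratic function with homogeneous part q̂, and μ > 0 such that d²q ≤ d²f ≤ (1+μ)d²q on T. Then for every edge e of T, the L¹ interpolation-error decrease satisfies (|T|/12)·q̂(e) ≤ D_T(e,f) ≤ (1+μ)·(|T|/12)·q̂(e). Consequently, any edge e maximizing D_T(·,f) satisfies (1+μ)·q̂(e) ≥ max{q̂(a), q̂(b), q̂(c)}, i.e. the selected bisection is a μ-near longest edge bisection in the q-metric. -/

import Mathlib

open MeasureTheory Set

/-- The 2D cross product / determinant of two vectors of `ℝ × ℝ`. -/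
noncomputable def det2 (u v : ℝ × ℝ) : ℝ := u.1 * v.2 - u.2 * v.1

/-- The area of the triangle with vertices `p0, p1, p2`. -/
noncomputable def triArea (p0 p1 p2 : ℝ × ℝ) : ℝ := |det2 (p1 - p0) (p2 - p0)| / 2

/-- The (closed) triangle with vertices `p0, p1, p2`. -/
def tri (p0 p1 p2 : ℝ × ℝ) : Set (ℝ × ℝ) := convexHull ℝ {p0, p1, p2}

/-- The affine interpolation of `f` at the vertices `p0, p1, p2`, written with
barycentric coordinates; for affinely independent vertices it is the unique
affine function agreeing with `f` at the three vertices. -/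
noncomputable def interp (p0 p1 p2 : ℝ × ℝ) (f : ℝ × ℝ → ℝ) (x : ℝ × ℝ) : ℝ :=
  (det2 (p1 - x) (p2 - x) * f p0 + det2 (p2 - x) (p0 - x) * f p1 +
    det2 (p0 - x) (p1 - x) * f p2) / det2 (p1 - p0) (p2 - p0)

/-- The `L¹` interpolation error `‖f − I_T f‖_{L¹(T)}` on the triangle `T` with
vertices `p0, p1, p2`. -/
noncomputable def interpErr (p0 p1 p2 : ℝ × ℝ) (f : ℝ × ℝ → ℝ) : ℝ :=
  ∫ x in tri p0 p1 p2, |f x - interp p0 p1 p2 f x|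

/-- The decrease `D_T(e,f)` of the `L¹` interpolation error when the triangle
with vertices `z0, z1, z2` is bisected from the midpoint of the edge `e = [z0,z1]`
to the opposite vertex `z2`. -/
noncomputable def Ddec (z0 z1 z2 : ℝ × ℝ) (f : ℝ × ℝ → ℝ) : ℝ :=
  interpErr z0 z1 z2 f - interpErr z0 (midpoint ℝ z0 z1) z2 f -
    interpErr (midpoint ℝ z0 z1) z1 z2 f


lemma mem_tri_iff {p0 p1 p2 x : ℝ × ℝ} :
    x ∈ tri p0 p1 p2 ↔ ∃ a b c : ℝ, 0 ≤ a ∧ 0 ≤ b ∧ 0 ≤ c ∧ a + b + c = 1 ∧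
      x = a • p0 + b • p1 + c • p2 := by
  constructor
  · intro hx
    rw [tri, ← convexJoin_segment_singleton, mem_convexJoin] at hx
    obtain ⟨z, hz, w, hw, hx⟩ := hx
    obtain ⟨a, b, ha, hb, hab, hz⟩ := hz
    obtain ⟨t, c, ht, hc, htc, hx⟩ := hx
    rw [mem_singleton_iff] at hw
    subst hw
    refine ⟨t * a, t * b, c, by positivity, by positivity, hc, by nlinarith, ?_⟩
    rw [← hx, ← hz]
    module
  · rintro ⟨a, b, c, ha, hb, hc, habc, rfl⟩
    have h := Finset.centerMass_mem_convexHull (Finset.univ : Finset (Fin 3))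
      (w := ![a, b, c]) (z := ![p0, p1, p2]) (s := ({p0, p1, p2} : Set (ℝ × ℝ))) ?_ ?_ ?_
    · convert h using 1
      rfl
      rw [Finset.centerMass]
      simp [Fin.sum_univ_three, habc]
    · intro i _; fin_cases i <;> simpa
    · simp [Fin.sum_univ_three, habc]
    · intro i _; fin_cases i <;> simp [tri, Set.mem_insert_iff]
  
lemma convex_tri (p0 p1 p2 : ℝ × ℝ) : Convex ℝ (tri p0 p1 p2) := convex_convexHull ℝ _

lemma isCompact_tri (p0 p1 p2 : ℝ × ℝ) : IsCompact (tri p0 p1 p2) :=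
  ((Set.finite_singleton p2).insert p1 |>.insert p0).isCompact_convexHull ℝ

lemma measurableSet_tri (p0 p1 p2 : ℝ × ℝ) : MeasurableSet (tri p0 p1 p2) :=
  (isCompact_tri p0 p1 p2).isClosed.measurableSet

lemma vertex_mem_tri₀ (p0 p1 p2 : ℝ × ℝ) : p0 ∈ tri p0 p1 p2 :=
  subset_convexHull ℝ _ (by simp)
lemma vertex_mem_tri₁ (p0 p1 p2 : ℝ × ℝ) : p1 ∈ tri p0 p1 p2 :=
  subset_convexHull ℝ _ (by simp)
lemma vertex_mem_tri₂ (p0 p1 p2 : ℝ × ℝ) : p2 ∈ tri p0 p1 p2 :=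
  subset_convexHull ℝ _ (by simp)

lemma tri_perm (z0 z1 z2 : ℝ × ℝ) : tri z1 z2 z0 = tri z0 z1 z2 := by
  unfold tri; congr 1; ext x; simp [Set.mem_insert_iff]; tauto

lemma det2_cyclic (z0 z1 z2 : ℝ × ℝ) : det2 (z2 - z1) (z0 - z1) = det2 (z1 - z0) (z2 - z0) := by
  simp only [det2, Prod.fst_sub, Prod.snd_sub]; ring

lemma triArea_cyclic (z0 z1 z2 : ℝ × ℝ) : triArea z1 z2 z0 = triArea z0 z1 z2 := by
  unfold triArea; rw [det2_cyclic]

lemma det2_ne_zero_of_affineIndependent {z0 z1 z2 : ℝ × ℝ}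
    (hT : AffineIndependent ℝ ![z0, z1, z2]) : det2 (z1 - z0) (z2 - z0) ≠ 0 := by
  intro hdet
  rw [affineIndependent_iff] at hT
  simp only [det2, Prod.fst_sub, Prod.snd_sub] at hdet
  by_cases hu : z1 - z0 = 0
  · have := hT Finset.univ ![-1, 1, 0] (by simp [Fin.sum_univ_three])
      (by simp [Fin.sum_univ_three]
          have : z1 = z0 := by rwa [sub_eq_zero] at hu
          rw [this]; module) 1 (Finset.mem_univ _)
    norm_num at this
  · -- z1 - z0 ≠ 0, so z2 - z0 = c • (z1 - z0)
    have hu' : (z1 - z0).1 ≠ 0 ∨ (z1 - z0).2 ≠ 0 := by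
      by_contra h
      push_neg at h
      exact hu (Prod.ext h.1 h.2)
    simp only [Prod.fst_sub, Prod.snd_sub] at hu'
    obtain ⟨c, hc1, hc2⟩ : ∃ c : ℝ, z2.1 - z0.1 = c * (z1.1 - z0.1) ∧
        z2.2 - z0.2 = c * (z1.2 - z0.2) := by
      rcases hu' with h | h
      · exact ⟨(z2.1 - z0.1) / (z1.1 - z0.1), by field_simp, by field_simp; nlinarith⟩
      · exact ⟨(z2.2 - z0.2) / (z1.2 - z0.2), by field_simp; nlinarith, by field_simp⟩
    have := hT Finset.univ ![c - 1, -c, 1] (by simp [Fin.sum_univ_three]; ring)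
      (by simp [Fin.sum_univ_three]
          apply Prod.ext <;> simp [Prod.smul_fst, Prod.smul_snd] <;> nlinarith)
      2 (Finset.mem_univ _)
    norm_num at this
    simp [Matrix.cons_val] at this


lemma tri_std_eq : tri ((0:ℝ),(0:ℝ)) (1,0) (0,1) =
    {x : ℝ × ℝ | 0 ≤ x.1 ∧ 0 ≤ x.2 ∧ x.1 + x.2 ≤ 1} := by
  ext x
  rw [mem_tri_iff]
  constructor
  · rintro ⟨a, b, c, ha, hb, hc, habc, rfl⟩
    constructor
    · simp [Prod.smul_fst]; positivity
    constructor
    · simp [Prod.smul_snd]; positivity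
    · simp [Prod.smul_fst, Prod.smul_snd]; linarith
  · rintro ⟨h1, h2, h3⟩
    exact ⟨1 - x.1 - x.2, x.1, x.2, by linarith, h1, h2, by ring,
      by apply Prod.ext <;> simp⟩

lemma integral_poly2 (c2 c1 c0 : ℝ) :
    ∫ u in (0:ℝ)..1, (c2 * u ^ 2 + c1 * u + c0) = c2 / 3 + c1 / 2 + c0 := by
  have h2 : IntervalIntegrable (fun u : ℝ => c2 * u ^ 2) volume 0 1 :=
    (continuous_const.mul (continuous_pow 2)).intervalIntegrable _ _
  have h1 : IntervalIntegrable (fun u : ℝ => c1 * u) volume 0 1 :=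
    (continuous_const.mul continuous_id).intervalIntegrable _ _
  have h0 : IntervalIntegrable (fun u : ℝ => c0) volume 0 1 :=
    (continuous_const).intervalIntegrable _ _
  rw [intervalIntegral.integral_add (h2.add h1) h0, intervalIntegral.integral_add h2 h1,
    intervalIntegral.integral_const_mul, intervalIntegral.integral_const_mul,
    integral_pow, integral_id, intervalIntegral.integral_const]
  norm_num
  ring

lemma integral_linear_Icc (a b c d : ℝ) (hab : a ≤ b) :
    ∫ v in Icc a b, (c * v + d) = c * (b ^ 2 - a ^ 2) / 2 + d * (b - a) := by
  rw [integral_Icc_eq_integral_Ioc, ← intervalIntegral.integral_of_le hab]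
  have h1 : IntervalIntegrable (fun v : ℝ => c * v) volume a b :=
    (continuous_const.mul continuous_id).intervalIntegrable _ _
  have h0 : IntervalIntegrable (fun v : ℝ => d) volume a b :=
    continuous_const.intervalIntegrable _ _
  rw [intervalIntegral.integral_add h1 h0, intervalIntegral.integral_const_mul, integral_id,
    intervalIntegral.integral_const]
  simp; ring

lemma integral_stdtri (α β γ : ℝ) :
    ∫ x in tri ((0:ℝ),(0:ℝ)) (1,0) (0,1), (α * x.1 + β * x.2 + γ) = α / 6 + β / 6 + γ / 2 := by
  set S := tri ((0:ℝ),(0:ℝ)) (1,0) (0,1) with hS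
  set g : ℝ × ℝ → ℝ := fun x => α * x.1 + β * x.2 + γ with hg
  have hgc : Continuous g := by fun_prop
  have hSm : MeasurableSet S := measurableSet_tri _ _ _
  have hInt : IntegrableOn g S volume :=
    hgc.continuousOn.integrableOn_compact (isCompact_tri _ _ _)
  rw [← integral_indicator hSm]
  rw [Measure.volume_eq_prod]
  rw [integral_prod _ (by
    rw [← Measure.volume_eq_prod]
    exact hInt.integrable_indicator hSm)]
  have key : ∀ u : ℝ, (∫ v : ℝ, S.indicator g (u, v)) =
      (Icc (0:ℝ) 1).indicator (fun u => (1 - u) * (α * u + γ) + β * (1 - u) ^ 2 / 2) u := by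
    intro u
    by_cases hu : u ∈ Icc (0:ℝ) 1
    · obtain ⟨hu0, hu1⟩ := hu
      have hmem : ∀ v : ℝ, S.indicator g (u, v) =
          (Icc (0:ℝ) (1 - u)).indicator (fun v => α * u + (β * v + γ)) v := by
        intro v
        by_cases hv : v ∈ Icc (0:ℝ) (1 - u)
        · rw [indicator_of_mem hv, indicator_of_mem]
          · simp [hg]; ring
          · rw [hS, tri_std_eq]
            simp only [Set.mem_setOf_eq]
            refine ⟨hu0, hv.1, ?_⟩
            have := hv.2
            linarith
        · rw [indicator_of_notMem hv, indicator_of_notMem]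
          rw [hS, tri_std_eq]
          simp only [Set.mem_setOf_eq]
          intro hmem
          obtain ⟨h1', h2', h3'⟩ := hmem
          exact hv (mem_Icc.mpr ⟨h2', by linarith⟩)
      simp_rw [hmem]
      rw [integral_indicator measurableSet_Icc, indicator_of_mem (mem_Icc.mpr ⟨hu0, hu1⟩)]
      have := integral_linear_Icc 0 (1 - u) β (α * u + γ) (by linarith)
      simp_rw [show ∀ v:ℝ, α * u + (β * v + γ) = β * v + (α * u + γ) by intro v; ring]
      rw [this]; ring
    · have hmem : ∀ v : ℝ, S.indicator g (u, v) = 0 := by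
        intro v
        rw [indicator_of_notMem]
        rw [hS, tri_std_eq]
        simp only [Set.mem_setOf_eq]
        simp only [mem_Icc, not_and_or, not_le] at hu
        rcases hu with h | h
        · intro hm; exact absurd hm.1 (not_le.mpr h)
        · intro hm
          obtain ⟨h1', h2', h3'⟩ := hm
          linarith
      simp_rw [hmem]
      rw [integral_zero, indicator_of_notMem hu]
  simp_rw [← hg, key]
  rw [integral_indicator measurableSet_Icc, integral_Icc_eq_integral_Ioc,
    ← intervalIntegral.integral_of_le (by norm_num : (0:ℝ) ≤ 1)]
  have := integral_poly2 (-α + β / 2) (α - γ - β) (γ + β / 2)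
  rw [intervalIntegral.integral_congr (g := fun u => (-α + β/2) * u ^ 2 + (α - γ - β) * u + (γ + β/2))
    (by intro u _; ring)]
  rw [this]; ring


lemma integral_tri_affine (p0 p1 p2 : ℝ × ℝ) (hD : det2 (p1 - p0) (p2 - p0) ≠ 0) (α β γ : ℝ) :
    ∫ x in tri p0 p1 p2, (α * x.1 + β * x.2 + γ) =
      triArea p0 p1 p2 * (((α * p0.1 + β * p0.2 + γ) + (α * p1.1 + β * p1.2 + γ) +
        (α * p2.1 + β * p2.2 + γ)) / 3) := by
  set u := p1 - p0 with hu
  set v := p2 - p0 with hv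
  set M : (ℝ × ℝ) →L[ℝ] (ℝ × ℝ) := LinearMap.toContinuousLinearMap
    (Matrix.toLin (Module.Basis.finTwoProd ℝ) (Module.Basis.finTwoProd ℝ) !![u.1, v.1; u.2, v.2]) with hM
  have hMapp : ∀ x : ℝ × ℝ, M x = (u.1 * x.1 + v.1 * x.2, u.2 * x.1 + v.2 * x.2) := by
    intro x
    rw [hM]
    exact Matrix.toLin_finTwoProd_apply _ _ _ _ x
  have hMdet : M.det = det2 u v := by
    rw [ContinuousLinearMap.det, hM, LinearMap.coe_toContinuousLinearMap,
      LinearMap.det_toLin, Matrix.det_fin_two_of, det2]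
    ring
  set F : ℝ × ℝ → ℝ × ℝ := fun x => p0 + M x with hF
  set S := tri ((0:ℝ),(0:ℝ)) (1,0) (0,1) with hS
  have hFapp : ∀ x : ℝ × ℝ, F x = (p0.1 + u.1 * x.1 + v.1 * x.2, p0.2 + u.2 * x.1 + v.2 * x.2) := by
    intro x
    rw [hF]; simp only [hMapp]
    apply Prod.ext <;> simp <;> ring
  have hderiv : ∀ x ∈ S, HasFDerivWithinAt F M S x := fun x _ =>
    ((M.hasFDerivAt (x := x)).const_add p0).hasFDerivWithinAt
  have hdet2 : det2 u v ≠ 0 := hD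
  have hinj : InjOn F S := by
    intro x _ y _ hxy
    rw [hFapp, hFapp, Prod.ext_iff] at hxy
    obtain ⟨h1, h2⟩ := hxy
    simp only at h1 h2
    have hd : det2 u v = u.1 * v.2 - u.2 * v.1 := rfl
    have e1 : det2 u v * (x.1 - y.1) = 0 := by
      rw [hd]; linear_combination v.2 * h1 - v.1 * h2
    have e2 : det2 u v * (x.2 - y.2) = 0 := by
      rw [hd]; linear_combination u.1 * h2 - u.2 * h1
    have e1' : x.1 = y.1 := sub_eq_zero.mp ((mul_eq_zero.mp e1).resolve_left hdet2)
    have e2' : x.2 = y.2 := sub_eq_zero.mp ((mul_eq_zero.mp e2).resolve_left hdet2)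
    exact Prod.ext e1' e2'
  have himg : F '' S = tri p0 p1 p2 := by
    ext x
    constructor
    · rintro ⟨w, hw, rfl⟩
      rw [hS, mem_tri_iff] at hw
      obtain ⟨a, b, c, ha, hb, hc, habc, hw⟩ := hw
      rw [mem_tri_iff]
      refine ⟨a, b, c, ha, hb, hc, habc, ?_⟩
      have hw1 : w.1 = b := by rw [hw]; simp
      have hw2 : w.2 = c := by rw [hw]; simp
      rw [hFapp]
      apply Prod.ext
      · simp only [hw1, hw2, hu, hv, Prod.fst_add, Prod.smul_fst, Prod.fst_sub, smul_eq_mul]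
        linear_combination -p0.1 * habc
      · simp only [hw1, hw2, hu, hv, Prod.snd_add, Prod.smul_snd, Prod.snd_sub, smul_eq_mul]
        linear_combination -p0.2 * habc
    · intro hx
      rw [mem_tri_iff] at hx
      obtain ⟨a, b, c, ha, hb, hc, habc, rfl⟩ := hx
      refine ⟨(b, c), ?_, ?_⟩
      · rw [hS, mem_tri_iff]
        exact ⟨a, b, c, ha, hb, hc, habc, by apply Prod.ext <;> simp⟩
      · rw [hFapp]
        apply Prod.ext
        · simp only [hu, hv, Prod.fst_add, Prod.smul_fst, Prod.fst_sub, smul_eq_mul]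
          linear_combination -p0.1 * habc
        · simp only [hu, hv, Prod.snd_add, Prod.smul_snd, Prod.snd_sub, smul_eq_mul]
          linear_combination -p0.2 * habc
  have hSm : MeasurableSet S := measurableSet_tri _ _ _
  have hcov := integral_image_eq_integral_abs_det_fderiv_smul volume hSm
    (fun x hx => hderiv x hx) hinj (fun x => α * x.1 + β * x.2 + γ)
  rw [himg] at hcov
  rw [hcov]
  have : ∀ x : ℝ × ℝ, |(M : (ℝ × ℝ) →L[ℝ] (ℝ × ℝ)).det| •
      (α * (F x).1 + β * (F x).2 + γ) =
      |det2 u v| * ((α * u.1 + β * u.2) * x.1 + (α * v.1 + β * v.2) * x.2 +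
        (α * p0.1 + β * p0.2 + γ)) := by
    intro x
    rw [hMdet, hFapp]
    simp only [smul_eq_mul]
    ring
  simp_rw [this]
  rw [integral_const_mul, hS, integral_stdtri]
  rw [triArea, hu, hv]
  field_simp
  simp only [Prod.fst_sub, Prod.snd_sub, Prod.fst_add, Prod.snd_add, Prod.fst_neg, Prod.snd_neg]
  ring


lemma line_hasDerivAt (f : ℝ × ℝ → ℝ) (hf : ContDiff ℝ 2 f) (x w : ℝ × ℝ) (t : ℝ) :
    HasDerivAt (fun t : ℝ => f (x + t • w)) (fderiv ℝ f (x + t • w) w) t := by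
  have hline : HasDerivAt (fun t : ℝ => x + t • w) w t := by
    simpa using ((hasDerivAt_id t).smul_const w).const_add x
  have hfd : HasFDerivAt f (fderiv ℝ f (x + t • w)) (x + t • w) :=
    (hf.differentiable (by norm_num) _).hasFDerivAt
  exact (hfd.comp_hasDerivAt t hline)

lemma line_hasDerivAt2 (f : ℝ × ℝ → ℝ) (hf : ContDiff ℝ 2 f) (x w : ℝ × ℝ) (t : ℝ) :
    HasDerivAt (fun t : ℝ => fderiv ℝ f (x + t • w) w)
      (fderiv ℝ (fderiv ℝ f) (x + t • w) w w) t := by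
  have hline : HasDerivAt (fun t : ℝ => x + t • w) w t := by
    simpa using ((hasDerivAt_id t).smul_const w).const_add x
  have hf' : ContDiff ℝ 1 (fderiv ℝ f) := by
    have h2 : ContDiff ℝ (1 + 1 : ℕ) f := by norm_num; exact hf
    exact (contDiff_succ_iff_fderiv.mp h2).2.2
  have hfd : HasFDerivAt (fderiv ℝ f) (fderiv ℝ (fderiv ℝ f) (x + t • w)) (x + t • w) :=
    (hf'.differentiable (by norm_num) _).hasFDerivAt
  have h1 : HasDerivAt (fun t : ℝ => fderiv ℝ f (x + t • w))
      (fderiv ℝ (fderiv ℝ f) (x + t • w) w) t := by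
    exact hfd.comp_hasDerivAt t hline
  have h2 := (ContinuousLinearMap.apply ℝ ℝ w).hasFDerivAt.comp_hasDerivAt t h1
  exact h2

lemma convex_along (f : ℝ × ℝ → ℝ) (hf : ContDiff ℝ 2 f) (s : Set (ℝ × ℝ))
    (x w : ℝ × ℝ) (hseg : ∀ t ∈ Icc (0:ℝ) 1, x + t • w ∈ s) (κ : ℝ)
    (hb : ∀ z ∈ s, κ ≤ fderiv ℝ (fderiv ℝ f) z w w) :
    ConvexOn ℝ (Icc (0:ℝ) 1) (fun t : ℝ => f (x + t • w) - κ / 2 * t ^ 2) := by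
  have hd1 : ∀ t : ℝ, HasDerivAt (fun t : ℝ => f (x + t • w) - κ / 2 * t ^ 2)
      (fderiv ℝ f (x + t • w) w - κ * t) t := by
    intro t
    have := (line_hasDerivAt f hf x w t).sub (((hasDerivAt_pow 2 t).const_mul (κ / 2)))
    refine this.congr_deriv ?_
    simp; ring
  have hderiv1 : deriv (fun t : ℝ => f (x + t • w) - κ / 2 * t ^ 2) =
      fun t => fderiv ℝ f (x + t • w) w - κ * t := funext fun t => (hd1 t).deriv
  have hd2 : ∀ t : ℝ, HasDerivAt (fun t => fderiv ℝ f (x + t • w) w - κ * t)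
      (fderiv ℝ (fderiv ℝ f) (x + t • w) w w - κ) t := fun t =>
    (line_hasDerivAt2 f hf x w t).sub (by simpa using (hasDerivAt_id t).const_mul κ)
  apply convexOn_of_deriv2_nonneg (convex_Icc 0 1)
  · exact fun t _ => ((hd1 t).continuousAt).continuousWithinAt
  · exact fun t _ => ((hd1 t).differentiableAt).differentiableWithinAt
  · rw [hderiv1]
    exact fun t _ => ((hd2 t).differentiableAt).differentiableWithinAt
  · intro t ht
    rw [interior_Icc] at ht
    have : deriv^[2] (fun t : ℝ => f (x + t • w) - κ / 2 * t ^ 2) t =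
        fderiv ℝ (fderiv ℝ f) (x + t • w) w w - κ := by
      rw [Function.iterate_succ, Function.iterate_one, Function.comp_apply]
      rw [hderiv1]
      exact (hd2 t).deriv
    rw [this, sub_nonneg]
    exact hb _ (hseg t ⟨le_of_lt ht.1, le_of_lt ht.2⟩)


lemma interp_bary {p0 p1 p2 : ℝ × ℝ} (hD : det2 (p1 - p0) (p2 - p0) ≠ 0)
    (f : ℝ × ℝ → ℝ) (a b c : ℝ) (habc : a + b + c = 1) :
    interp p0 p1 p2 f (a • p0 + b • p1 + c • p2) = a * f p0 + b * f p1 + c * f p2 := by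
  have ha' : a = 1 - b - c := by linarith
  subst ha'
  unfold interp det2 at *
  simp only [Prod.fst_sub, Prod.snd_sub, Prod.fst_add, Prod.snd_add, Prod.smul_fst,
    Prod.smul_snd, smul_eq_mul] at *
  field_simp
  ring

lemma interp_affine {p0 p1 p2 : ℝ × ℝ} (hD : det2 (p1 - p0) (p2 - p0) ≠ 0) (f : ℝ × ℝ → ℝ) :
    ∃ α β γ : ℝ, ∀ x : ℝ × ℝ, interp p0 p1 p2 f x = α * x.1 + β * x.2 + γ := by
  refine ⟨((p1.2 - p2.2) * f p0 + (p2.2 - p0.2) * f p1 + (p0.2 - p1.2) * f p2) /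
      det2 (p1 - p0) (p2 - p0),
    ((p2.1 - p1.1) * f p0 + (p0.1 - p2.1) * f p1 + (p1.1 - p0.1) * f p2) /
      det2 (p1 - p0) (p2 - p0),
    (det2 p1 p2 * f p0 + det2 p2 p0 * f p1 + det2 p0 p1 * f p2) /
      det2 (p1 - p0) (p2 - p0), fun x => ?_⟩
  unfold interp det2 at *
  simp only [Prod.fst_sub, Prod.snd_sub] at *
  field_simp
  ring

lemma convexOn_tri (f : ℝ × ℝ → ℝ) (hf : ContDiff ℝ 2 f) (p0 p1 p2 : ℝ × ℝ)
    (hpos : ∀ z ∈ tri p0 p1 p2, ∀ v : ℝ × ℝ, 0 ≤ fderiv ℝ (fderiv ℝ f) z v v) :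
    ConvexOn ℝ (tri p0 p1 p2) f := by
  refine ⟨convex_convexHull ℝ _, ?_⟩
  intro x hx y hy a b ha hb hab
  have hseg : ∀ t ∈ Icc (0:ℝ) 1, x + t • (y - x) ∈ tri p0 p1 p2 := by
    intro t ht
    have := (convex_convexHull ℝ ({p0, p1, p2} : Set (ℝ × ℝ))) hx hy
      (by linarith [ht.2] : (0:ℝ) ≤ 1 - t) ht.1 (by ring)
    convert this using 1
    rfl
    module
  have hc := convex_along f hf (tri p0 p1 p2) x (y - x) hseg 0
    (fun z hz => hpos z hz _)
  have h2 := hc.2 (left_mem_Icc.mpr zero_le_one) (right_mem_Icc.mpr zero_le_one) ha hb hab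
  simp only [smul_eq_mul, mul_zero, mul_one, zero_add] at h2
  have e0 : x + (0:ℝ) • (y - x) = x := by module
  have e1 : x + (1:ℝ) • (y - x) = y := by module
  have eb : x + b • (y - x) = a • x + b • y := by
    have : a = 1 - b := by linarith
    subst this; module
  rw [e0, e1, eb] at h2
  calc f (a • x + b • y) = f (a • x + b • y) - 0 / 2 * b ^ 2 := by ring_nf
    _ ≤ a * (f x - 0 / 2 * 0 ^ 2) + b * (f y - 0 / 2 * 1 ^ 2) := h2
    _ = a * f x + b * f y := by ring

lemma f_le_interp {p0 p1 p2 : ℝ × ℝ} (hD : det2 (p1 - p0) (p2 - p0) ≠ 0)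
    {f : ℝ × ℝ → ℝ} (hcx : ConvexOn ℝ (tri p0 p1 p2) f) :
    ∀ x ∈ tri p0 p1 p2, f x ≤ interp p0 p1 p2 f x := by
  intro x hx
  rw [mem_tri_iff] at hx
  obtain ⟨a, b, c, ha, hb, hc, habc, rfl⟩ := hx
  rw [interp_bary hD f a b c habc]
  have := hcx.map_sum_le (t := (Finset.univ : Finset (Fin 3))) (w := ![a, b, c])
    (p := ![p0, p1, p2]) (by intro i _; fin_cases i <;> simpa)
    (by simp [Fin.sum_univ_three, habc])
    (by intro i _; fin_cases i <;> exact subset_convexHull ℝ _ (by simp))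
  simpa [Fin.sum_univ_three, smul_eq_mul] using this


lemma line_null (α β γ : ℝ) (h : α ≠ 0 ∨ β ≠ 0) :
    volume {x : ℝ × ℝ | α * x.1 + β * x.2 = γ} = 0 := by
  set l : (ℝ × ℝ) →ₗ[ℝ] ℝ := α • LinearMap.fst ℝ ℝ ℝ + β • LinearMap.snd ℝ ℝ ℝ with hl
  have hlapp : ∀ x : ℝ × ℝ, l x = α * x.1 + β * x.2 := by
    intro x; simp [hl]
  have hker : LinearMap.ker l ≠ ⊤ := by
    intro hk
    rcases h with h | h
    · have : ((1:ℝ), (0:ℝ)) ∈ LinearMap.ker l := hk ▸ Submodule.mem_top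
      rw [LinearMap.mem_ker, hlapp] at this
      simp at this; exact h this
    · have : ((0:ℝ), (1:ℝ)) ∈ LinearMap.ker l := hk ▸ Submodule.mem_top
      rw [LinearMap.mem_ker, hlapp] at this
      simp at this; exact h this
  obtain ⟨w0, hw0⟩ : ∃ w0 : ℝ × ℝ, l w0 = γ := by
    rcases h with h | h
    · exact ⟨(γ / α, 0), by rw [hlapp]; field_simp; simp⟩
    · exact ⟨(0, γ / β), by rw [hlapp]; field_simp; simp⟩
  have hset : {x : ℝ × ℝ | α * x.1 + β * x.2 = γ} =
      (AffineSubspace.mk' w0 (LinearMap.ker l) : Set (ℝ × ℝ)) := by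
    ext x
    rw [SetLike.mem_coe, AffineSubspace.mem_mk', LinearMap.mem_ker]
    rw [vsub_eq_sub, map_sub, hw0, sub_eq_zero, hlapp, mem_setOf_eq]
  rw [hset]
  apply Measure.addHaar_affineSubspace
  intro htop
  apply hker
  have := AffineSubspace.direction_mk' w0 (LinearMap.ker l)
  rw [htop] at this
  rw [← this, AffineSubspace.direction_top]

lemma midpoint_comb (z0 z1 : ℝ × ℝ) :
    midpoint ℝ z0 z1 = (1/2 : ℝ) • z0 + (1/2 : ℝ) • z1 := by
  have : midpoint ℝ z0 z1 = (2⁻¹ : ℝ) • (z0 + z1) := by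
    rw [midpoint_eq_smul_add]
    norm_num
  rw [this]; module

lemma tri_subset {p0 p1 p2 : ℝ × ℝ} {s : Set (ℝ × ℝ)} (hs : Convex ℝ s)
    (h0 : p0 ∈ s) (h1 : p1 ∈ s) (h2 : p2 ∈ s) : tri p0 p1 p2 ⊆ s :=
  convexHull_min (by intro x hx; rcases hx with rfl | rfl | rfl <;> assumption) hs

lemma midpoint_mem_tri (z0 z1 z2 : ℝ × ℝ) : midpoint ℝ z0 z1 ∈ tri z0 z1 z2 := by
  rw [mem_tri_iff]
  exact ⟨1/2, 1/2, 0, by norm_num, by norm_num, le_refl _, by norm_num,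
    by rw [midpoint_comb]; module⟩

lemma tri_split (z0 z1 z2 : ℝ × ℝ) :
    tri z0 z1 z2 = tri z0 (midpoint ℝ z0 z1) z2 ∪ tri (midpoint ℝ z0 z1) z1 z2 := by
  set m := midpoint ℝ z0 z1 with hm
  apply Subset.antisymm
  · intro x hx
    rw [mem_tri_iff] at hx
    obtain ⟨a, b, c, ha, hb, hc, habc, rfl⟩ := hx
    rcases le_total b a with hba | hab
    · left
      rw [mem_tri_iff]
      refine ⟨a - b, 2 * b, c, by linarith, by linarith, hc, by linarith, ?_⟩
      rw [hm, midpoint_comb]; module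
    · right
      rw [mem_tri_iff]
      refine ⟨2 * a, b - a, c, by linarith, by linarith, hc, by linarith, ?_⟩
      rw [hm, midpoint_comb]; module
  · apply union_subset
    · exact tri_subset (convex_convexHull ℝ _) (subset_convexHull ℝ _ (by simp))
        (midpoint_mem_tri z0 z1 z2) (subset_convexHull ℝ _ (by simp))
    · exact tri_subset (convex_convexHull ℝ _) (midpoint_mem_tri z0 z1 z2)
        (subset_convexHull ℝ _ (by simp)) (subset_convexHull ℝ _ (by simp))

lemma tri_inter_null {z0 z1 z2 : ℝ × ℝ} (hD : det2 (z1 - z0) (z2 - z0) ≠ 0) :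
    volume (tri z0 (midpoint ℝ z0 z1) z2 ∩ tri (midpoint ℝ z0 z1) z1 z2) = 0 := by
  set m := midpoint ℝ z0 z1 with hm
  set D := det2 (z1 - z0) (z2 - z0) with hDdef
  -- the signed side function
  set s : ℝ × ℝ → ℝ := fun x => det2 (x - m) (z2 - m) with hs
  have hsval : ∀ x : ℝ × ℝ, s x = (z2.2 - m.2) * x.1 + (-(z2.1 - m.1)) * x.2 +
      (m.2 * z2.1 - m.1 * z2.2) := by
    intro x; simp only [hs, det2, Prod.fst_sub, Prod.snd_sub]; ring
  have hcomb : ∀ (u v w : ℝ × ℝ) (a b c : ℝ), a + b + c = 1 →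
      s (a • u + b • v + c • w) = a * s u + b * s v + c * s w := by
    intro u v w a b c habc
    have ha' : a = 1 - b - c := by linarith
    subst ha'
    simp only [hsval, Prod.fst_add, Prod.snd_add, Prod.smul_fst, Prod.smul_snd, smul_eq_mul]
    ring
  have hsz0 : s z0 = -D / 2 := by
    simp only [hs, det2, hm, midpoint_comb, hDdef, Prod.fst_sub, Prod.snd_sub, Prod.fst_add,
      Prod.snd_add, Prod.smul_fst, Prod.smul_snd, smul_eq_mul]
    ring
  have hsz1 : s z1 = D / 2 := by
    simp only [hs, det2, hm, midpoint_comb, hDdef, Prod.fst_sub, Prod.snd_sub, Prod.fst_add,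
      Prod.snd_add, Prod.smul_fst, Prod.smul_snd, smul_eq_mul]
    ring
  have hsm : s m = 0 := by simp only [hs, det2]; simp
  have hsz2 : s z2 = 0 := by simp only [hs, det2]; ring
  have hsub : tri z0 m z2 ∩ tri m z1 z2 ⊆ {x : ℝ × ℝ | s x = 0} := by
    rintro x ⟨hx1, hx2⟩
    rw [mem_tri_iff] at hx1 hx2
    obtain ⟨a, b, c, ha, hb, hc, habc, rfl⟩ := hx1
    obtain ⟨a', b', c', ha', hb', hc', habc', hx⟩ := hx2
    have e1 : s (a • z0 + b • m + c • z2) = a * (-D / 2) := by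
      rw [hcomb _ _ _ _ _ _ habc, hsz0, hsm, hsz2]; ring
    have e2 : s (a • z0 + b • m + c • z2) = b' * (D / 2) := by
      rw [hx, hcomb _ _ _ _ _ _ habc', hsm, hsz1, hsz2]; ring
    have : (a + b') * D = 0 := by
      have := e1.symm.trans e2
      nlinarith [this]
    have hab0 : a + b' = 0 := by
      rcases mul_eq_zero.mp this with h | h
      · exact h
      · exact absurd h hD
    have ha0 : a = 0 := by linarith
    rw [mem_setOf_eq, e1, ha0]; ring
  apply measure_mono_null hsub
  have : {x : ℝ × ℝ | s x = 0} ⊆ {x : ℝ × ℝ | (z2.2 - m.2) * x.1 + (-(z2.1 - m.1)) * x.2 =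
      -(m.2 * z2.1 - m.1 * z2.2)} := by
    intro x hx
    rw [mem_setOf_eq] at hx ⊢
    rw [hsval] at hx
    linarith
  apply measure_mono_null this
  apply line_null
  by_contra hcon
  push_neg at hcon
  obtain ⟨h1, h2⟩ := hcon
  have hz2m : z2 = m := by
    apply Prod.ext
    · have h2' : z2.1 - m.1 = 0 := by
        have := h2
        rw [neg_eq_zero] at this
        exact this
      linarith
    · linarith [h1]
  have : s z0 = 0 := by rw [hs]; simp [hz2m, det2]
  rw [hsz0] at this
  apply hD
  have : D = 0 := by linarith
  rw [hDdef] at this ⊢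
  exact this


set_option maxHeartbeats 1000000 in
lemma Ddec_bounds (p0 p1 p2 : ℝ × ℝ) (hD : det2 (p1 - p0) (p2 - p0) ≠ 0)
    (f : ℝ × ℝ → ℝ) (hf : ContDiff ℝ 2 f) (qh : ℝ × ℝ → ℝ)
    (hconvq : ∀ v : ℝ × ℝ, 0 ≤ qh v) (μ : ℝ) (hμ : 0 < μ)
    (hhess : ∀ x ∈ tri p0 p1 p2, ∀ v : ℝ × ℝ,
      2 * qh v ≤ (fderiv ℝ (fderiv ℝ f) x) v v ∧
        (fderiv ℝ (fderiv ℝ f) x) v v ≤ (1 + μ) * (2 * qh v)) :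
    triArea p0 p1 p2 / 12 * qh (p1 - p0) ≤ Ddec p0 p1 p2 f ∧
      Ddec p0 p1 p2 f ≤ (1 + μ) * (triArea p0 p1 p2 / 12 * qh (p1 - p0)) := by
  set m := midpoint ℝ p0 p1 with hm
  have hmc : m = (1/2 : ℝ) • p0 + (1/2 : ℝ) • p1 := midpoint_comb p0 p1
  set D := det2 (p1 - p0) (p2 - p0) with hDdef
  have hD1 : det2 (m - p0) (p2 - p0) = D / 2 := by
    rw [hmc, hDdef]
    simp only [det2, Prod.fst_sub, Prod.snd_sub, Prod.fst_add, Prod.snd_add, Prod.smul_fst,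
      Prod.smul_snd, smul_eq_mul]
    ring
  have hD2 : det2 (p1 - m) (p2 - m) = D / 2 := by
    rw [hmc, hDdef]
    simp only [det2, Prod.fst_sub, Prod.snd_sub, Prod.fst_add, Prod.snd_add, Prod.smul_fst,
      Prod.smul_snd, smul_eq_mul]
    ring
  have hD1' : det2 (m - p0) (p2 - p0) ≠ 0 := by rw [hD1]; intro h; apply hD; rw [hDdef]; linarith
  have hD2' : det2 (p1 - m) (p2 - m) ≠ 0 := by rw [hD2]; intro h; apply hD; rw [hDdef]; linarith
  have harea1 : triArea p0 m p2 = triArea p0 p1 p2 / 2 := by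
    unfold triArea; rw [hD1, ← hDdef, abs_div, abs_two]
  have harea2 : triArea m p1 p2 = triArea p0 p1 p2 / 2 := by
    unfold triArea; rw [hD2, ← hDdef, abs_div, abs_two]
  -- subsets
  have hT1sub : tri p0 m p2 ⊆ tri p0 p1 p2 :=
    tri_subset (convex_convexHull ℝ _) (subset_convexHull ℝ _ (by simp))
      (midpoint_mem_tri p0 p1 p2) (subset_convexHull ℝ _ (by simp))
  have hT2sub : tri m p1 p2 ⊆ tri p0 p1 p2 :=
    tri_subset (convex_convexHull ℝ _) (midpoint_mem_tri p0 p1 p2)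
      (subset_convexHull ℝ _ (by simp)) (subset_convexHull ℝ _ (by simp))
  -- convexity of f
  have hcx : ConvexOn ℝ (tri p0 p1 p2) f :=
    convexOn_tri f hf p0 p1 p2 (fun z hz v =>
      le_trans (by have := hconvq v; linarith) (hhess z hz v).1)
  have hcx1 : ConvexOn ℝ (tri p0 m p2) f := hcx.subset hT1sub (convex_convexHull ℝ _)
  have hcx2 : ConvexOn ℝ (tri m p1 p2) f := hcx.subset hT2sub (convex_convexHull ℝ _)
  -- interps as affine functions
  obtain ⟨α0, β0, γ0, hI0⟩ := interp_affine hD f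
  obtain ⟨α1, β1, γ1, hI1⟩ := interp_affine hD1' f
  obtain ⟨α2, β2, γ2, hI2⟩ := interp_affine hD2' f
  have hI0c : Continuous (interp p0 p1 p2 f) := by
    have : interp p0 p1 p2 f = fun x => α0 * x.1 + β0 * x.2 + γ0 := funext hI0
    rw [this]; fun_prop
  have hI1c : Continuous (interp p0 m p2 f) := by
    have : interp p0 m p2 f = fun x => α1 * x.1 + β1 * x.2 + γ1 := funext hI1
    rw [this]; fun_prop
  have hI2c : Continuous (interp m p1 p2 f) := by
    have : interp m p1 p2 f = fun x => α2 * x.1 + β2 * x.2 + γ2 := funext hI2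
    rw [this]; fun_prop
  have hfc : Continuous f := hf.continuous
  -- interpErr as integrals of (interp - f)
  have herr0 : interpErr p0 p1 p2 f = ∫ x in tri p0 p1 p2, (interp p0 p1 p2 f x - f x) := by
    unfold interpErr
    apply setIntegral_congr_fun (measurableSet_tri _ _ _)
    intro x hx
    dsimp only
    rw [abs_sub_comm, abs_of_nonneg (sub_nonneg.mpr (f_le_interp hD hcx x hx))]
  have herr1 : interpErr p0 m p2 f = ∫ x in tri p0 m p2, (interp p0 m p2 f x - f x) := by
    unfold interpErr
    apply setIntegral_congr_fun (measurableSet_tri _ _ _)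
    intro x hx
    dsimp only
    rw [abs_sub_comm, abs_of_nonneg (sub_nonneg.mpr (f_le_interp hD1' hcx1 x hx))]
  have herr2 : interpErr m p1 p2 f = ∫ x in tri m p1 p2, (interp m p1 p2 f x - f x) := by
    unfold interpErr
    apply setIntegral_congr_fun (measurableSet_tri _ _ _)
    intro x hx
    dsimp only
    rw [abs_sub_comm, abs_of_nonneg (sub_nonneg.mpr (f_le_interp hD2' hcx2 x hx))]
  -- integrability
  have hint : ∀ (g : ℝ × ℝ → ℝ) (q0 q1 q2 : ℝ × ℝ), Continuous g →
      IntegrableOn g (tri q0 q1 q2) volume := fun g q0 q1 q2 hg =>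
    hg.continuousOn.integrableOn_compact (isCompact_tri _ _ _)
  -- splitting
  have hsplit : ∫ x in tri p0 p1 p2, (interp p0 p1 p2 f x - f x) =
      (∫ x in tri p0 m p2, (interp p0 p1 p2 f x - f x)) +
        ∫ x in tri m p1 p2, (interp p0 p1 p2 f x - f x) := by
    rw [tri_split p0 p1 p2, ← hm]
    exact integral_union_ae (tri_inter_null hD) ((measurableSet_tri _ _ _).nullMeasurableSet)
      (hint _ _ _ _ (hI0c.sub hfc)) (hint _ _ _ _ (hI0c.sub hfc))
  -- Ddec as sum of two affine integrals
  have hDdec : Ddec p0 p1 p2 f =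
      (∫ x in tri p0 m p2, (interp p0 p1 p2 f x - interp p0 m p2 f x)) +
        ∫ x in tri m p1 p2, (interp p0 p1 p2 f x - interp m p1 p2 f x) := by
    unfold Ddec
    rw [← hm, herr0, herr1, herr2, hsplit]
    rw [integral_sub (hint _ _ _ _ hI0c) (hint _ _ _ _ hI1c),
      integral_sub (hint _ _ _ _ hI0c) (hint _ _ _ _ hI2c),
      integral_sub (hint _ _ _ _ hI0c) (hint _ _ _ _ hfc),
      integral_sub (hint _ _ _ _ hI0c) (hint _ _ _ _ hfc),
      integral_sub (hint _ _ _ _ hI1c) (hint _ _ _ _ hfc),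
      integral_sub (hint _ _ _ _ hI2c) (hint _ _ _ _ hfc)]
    ring
  -- vertex values
  have hIv0 : interp p0 p1 p2 f p0 = f p0 := by
    have := interp_bary hD f 1 0 0 (by norm_num)
    simpa using this
  have hIv2 : interp p0 p1 p2 f p2 = f p2 := by
    have := interp_bary hD f 0 0 1 (by norm_num)
    simpa using this
  have hIvm : interp p0 p1 p2 f m = (f p0 + f p1) / 2 := by
    have := interp_bary hD f (1/2) (1/2) 0 (by norm_num)
    rw [hmc]
    simp only [zero_smul, add_zero] at this ⊢
    rw [this]; ring
  have hI1v0 : interp p0 m p2 f p0 = f p0 := by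
    have := interp_bary hD1' f 1 0 0 (by norm_num); simpa using this
  have hI1vm : interp p0 m p2 f m = f m := by
    have := interp_bary hD1' f 0 1 0 (by norm_num); simpa using this
  have hI1v2 : interp p0 m p2 f p2 = f p2 := by
    have := interp_bary hD1' f 0 0 1 (by norm_num); simpa using this
  have hI2vm : interp m p1 p2 f m = f m := by
    have := interp_bary hD2' f 1 0 0 (by norm_num); simpa using this
  have hI2v1 : interp m p1 p2 f p1 = f p1 := by
    have := interp_bary hD2' f 0 1 0 (by norm_num); simpa using this
  have hI2v2 : interp m p1 p2 f p2 = f p2 := by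
    have := interp_bary hD2' f 0 0 1 (by norm_num); simpa using this
  -- compute the two integrals
  set c : ℝ := (f p0 + f p1) / 2 - f m with hc
  have hint1 : ∫ x in tri p0 m p2, (interp p0 p1 p2 f x - interp p0 m p2 f x) =
      triArea p0 p1 p2 / 2 * (c / 3) := by
    have hfun : ∀ x : ℝ × ℝ, interp p0 p1 p2 f x - interp p0 m p2 f x =
        (α0 - α1) * x.1 + (β0 - β1) * x.2 + (γ0 - γ1) := by
      intro x; rw [hI0, hI1]; ring
    simp_rw [hfun]
    rw [integral_tri_affine p0 m p2 hD1' _ _ _]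
    have e0 : (α0 - α1) * p0.1 + (β0 - β1) * p0.2 + (γ0 - γ1) = 0 := by
      have h0 := hI0 p0; have h1 := hI1 p0
      rw [hIv0] at h0; rw [hI1v0] at h1
      linarith
    have e1 : (α0 - α1) * m.1 + (β0 - β1) * m.2 + (γ0 - γ1) = c := by
      have h0 := hI0 m; have h1 := hI1 m
      rw [hIvm] at h0; rw [hI1vm] at h1
      rw [hc]; linarith
    have e2 : (α0 - α1) * p2.1 + (β0 - β1) * p2.2 + (γ0 - γ1) = 0 := by
      have h0 := hI0 p2; have h1 := hI1 p2
      rw [hIv2] at h0; rw [hI1v2] at h1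
      linarith
    rw [e0, e1, e2, harea1]
    ring
  have hint2 : ∫ x in tri m p1 p2, (interp p0 p1 p2 f x - interp m p1 p2 f x) =
      triArea p0 p1 p2 / 2 * (c / 3) := by
    have hfun : ∀ x : ℝ × ℝ, interp p0 p1 p2 f x - interp m p1 p2 f x =
        (α0 - α2) * x.1 + (β0 - β2) * x.2 + (γ0 - γ2) := by
      intro x; rw [hI0, hI2]; ring
    simp_rw [hfun]
    rw [integral_tri_affine m p1 p2 hD2' _ _ _]
    have e0 : (α0 - α2) * m.1 + (β0 - β2) * m.2 + (γ0 - γ2) = c := by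
      have h0 := hI0 m; have h1 := hI2 m
      rw [hIvm] at h0; rw [hI2vm] at h1
      rw [hc]; linarith
    have e1 : (α0 - α2) * p1.1 + (β0 - β2) * p1.2 + (γ0 - γ2) = 0 := by
      have h0 := hI0 p1; have h1 := hI2 p1
      have hIv1 : interp p0 p1 p2 f p1 = f p1 := by
        have := interp_bary hD f 0 1 0 (by norm_num); simpa using this
      rw [hIv1] at h0; rw [hI2v1] at h1
      linarith
    have e2 : (α0 - α2) * p2.1 + (β0 - β2) * p2.2 + (γ0 - γ2) = 0 := by
      have h0 := hI0 p2; have h1 := hI2 p2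
      rw [hIv2] at h0; rw [hI2v2] at h1
      linarith
    rw [e0, e1, e2, harea2]
    ring
  have hDval : Ddec p0 p1 p2 f = triArea p0 p1 p2 * c / 3 := by
    rw [hDdec, hint1, hint2]; ring
  -- midpoint bounds on c
  set e : ℝ × ℝ := p1 - p0 with he
  have hedge : ∀ t ∈ Icc (0:ℝ) 1, p0 + t • e ∈ tri p0 p1 p2 := by
    intro t ht
    rw [mem_tri_iff]
    exact ⟨1 - t, t, 0, by linarith [ht.2], ht.1, le_refl _, by ring, by rw [he]; module⟩
  have hmem0 : (0:ℝ) ∈ Icc (0:ℝ) 1 := left_mem_Icc.mpr zero_le_one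
  have hmem1 : (1:ℝ) ∈ Icc (0:ℝ) 1 := right_mem_Icc.mpr zero_le_one
  have heval0 : p0 + (0:ℝ) • e = p0 := by module
  have heval1 : p0 + (1:ℝ) • e = p1 := by rw [he]; module
  have hevalh : p0 + ((1:ℝ)/2 * (0:ℝ) + (1:ℝ)/2 * (1:ℝ)) • e = m := by
    rw [he, hmc]
    have : (1:ℝ)/2 * (0:ℝ) + (1:ℝ)/2 * (1:ℝ) = 1/2 := by norm_num
    rw [this]; module
  have hlow : qh e / 4 ≤ c := by
    have hcv := convex_along f hf (tri p0 p1 p2) p0 e hedge (2 * qh e)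
      (fun z hz => (hhess z hz e).1)
    have h2 := hcv.2 hmem0 hmem1 (by norm_num : (0:ℝ) ≤ 1/2) (by norm_num : (0:ℝ) ≤ 1/2)
      (by norm_num)
    simp only [smul_eq_mul] at h2
    rw [hevalh, heval0, heval1] at h2
    rw [hc]
    nlinarith [h2]
  have hhigh : c ≤ (1 + μ) * qh e / 4 := by
    have hfneg : ContDiff ℝ 2 (fun x : ℝ × ℝ => -f x) := hf.neg
    have hhneg : ∀ z ∈ tri p0 p1 p2,
        fderiv ℝ (fderiv ℝ (fun x : ℝ × ℝ => -f x)) z e e =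
          -(fderiv ℝ (fderiv ℝ f) z e e) := by
      intro z hz
      have h1 : fderiv ℝ (fun x : ℝ × ℝ => -f x) = fun x => -(fderiv ℝ f x) :=
        funext fun x => fderiv_neg
      rw [h1]
      have h2 : fderiv ℝ (fun x : ℝ × ℝ => -(fderiv ℝ f x)) z = -(fderiv ℝ (fderiv ℝ f) z) :=
        fderiv_neg
      rw [h2]
      simp [ContinuousLinearMap.neg_apply]
    have hcv := convex_along (fun x => -f x) hfneg (tri p0 p1 p2) p0 e hedge
      (-((1 + μ) * (2 * qh e)))
      (fun z hz => by rw [hhneg z hz]; linarith [(hhess z hz e).2])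
    have h2 := hcv.2 hmem0 hmem1 (by norm_num : (0:ℝ) ≤ 1/2) (by norm_num : (0:ℝ) ≤ 1/2)
      (by norm_num)
    simp only [smul_eq_mul] at h2
    rw [hevalh, heval0, heval1] at h2
    rw [hc]
    nlinarith [h2]
  have hareapos : (0:ℝ) ≤ triArea p0 p1 p2 := by
    unfold triArea; positivity
  constructor
  · rw [hDval]
    nlinarith [hlow, hareapos]
  · rw [hDval]
    nlinarith [hhigh, hareapos]


/-- if `f ∈ C²` and the convex quadratic `q` (homogeneous part
`qh`) satisfy `d²q ≤ d²f ≤ (1+μ)d²q` on the triangle `T` with vertices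
`z0, z1, z2`, then for every edge `e` of `T`,
`(|T|/12)·qh(e) ≤ D_T(e,f) ≤ (1+μ)·(|T|/12)·qh(e)`; consequently any edge
maximizing `D_T(·,f)` (stated for the edge `[z0,z1]`) satisfies
`(1+μ)·qh(e) ≥ max{qh(a), qh(b), qh(c)}`, i.e. the selected bisection is a
`μ`-near longest edge bisection in the `q`-metric. -/
theorem stmt15 (z0 z1 z2 : ℝ × ℝ) (hT : AffineIndependent ℝ ![z0, z1, z2])
    (f : ℝ × ℝ → ℝ) (hf : ContDiff ℝ 2 f)
    (a20 a11 a02 a10 a01 a00 : ℝ) (q qh : ℝ × ℝ → ℝ)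
    (hq : q = fun p => a20 * p.1 ^ 2 + 2 * a11 * p.1 * p.2 + a02 * p.2 ^ 2 +
      a10 * p.1 + a01 * p.2 + a00)
    (hqh : qh = fun p => a20 * p.1 ^ 2 + 2 * a11 * p.1 * p.2 + a02 * p.2 ^ 2)
    (hconvq : ∀ v : ℝ × ℝ, 0 ≤ qh v)
    (μ : ℝ) (hμ : 0 < μ)
    (hhess : ∀ x ∈ tri z0 z1 z2, ∀ v : ℝ × ℝ,
      2 * qh v ≤ (fderiv ℝ (fderiv ℝ f) x) v v ∧
        (fderiv ℝ (fderiv ℝ f) x) v v ≤ (1 + μ) * (2 * qh v)) :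
    (triArea z0 z1 z2 / 12 * qh (z1 - z0) ≤ Ddec z0 z1 z2 f ∧
      Ddec z0 z1 z2 f ≤ (1 + μ) * (triArea z0 z1 z2 / 12 * qh (z1 - z0))) ∧
    (triArea z0 z1 z2 / 12 * qh (z2 - z1) ≤ Ddec z1 z2 z0 f ∧
      Ddec z1 z2 z0 f ≤ (1 + μ) * (triArea z0 z1 z2 / 12 * qh (z2 - z1))) ∧
    (triArea z0 z1 z2 / 12 * qh (z0 - z2) ≤ Ddec z2 z0 z1 f ∧
      Ddec z2 z0 z1 f ≤ (1 + μ) * (triArea z0 z1 z2 / 12 * qh (z0 - z2))) ∧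
    ((Ddec z1 z2 z0 f ≤ Ddec z0 z1 z2 f ∧ Ddec z2 z0 z1 f ≤ Ddec z0 z1 z2 f) →
      max (max (qh (z1 - z0)) (qh (z2 - z1))) (qh (z0 - z2)) ≤
        (1 + μ) * qh (z1 - z0)) := by
  have hD : det2 (z1 - z0) (z2 - z0) ≠ 0 := det2_ne_zero_of_affineIndependent hT
  have hDb : det2 (z2 - z1) (z0 - z1) ≠ 0 := by rw [det2_cyclic]; exact hD
  have hDc : det2 (z0 - z2) (z1 - z2) ≠ 0 := by
    rw [det2_cyclic z1 z2 z0, det2_cyclic z0 z1 z2]; exact hD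
  have hhess' : ∀ x ∈ tri z0 z1 z2, ∀ v : ℝ × ℝ,
      2 * qh v ≤ (fderiv ℝ (fderiv ℝ f) x) v v ∧
        (fderiv ℝ (fderiv ℝ f) x) v v ≤ (1 + μ) * (2 * qh v) := hhess
  have hb1 := Ddec_bounds z0 z1 z2 hD f hf qh hconvq μ hμ hhess'
  have hb2 := Ddec_bounds z1 z2 z0 hDb f hf qh hconvq μ hμ
    (fun x hx => hhess' x (by rwa [tri_perm z0 z1 z2] at hx))
  have hb3 := Ddec_bounds z2 z0 z1 hDc f hf qh hconvq μ hμ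
    (fun x hx => hhess' x (by rwa [tri_perm z1 z2 z0, tri_perm z0 z1 z2] at hx))
  rw [triArea_cyclic z0 z1 z2] at hb2
  rw [triArea_cyclic z1 z2 z0, triArea_cyclic z0 z1 z2] at hb3
  refine ⟨hb1, hb2, hb3, ?_⟩
  rintro ⟨hba, hca⟩
  have hApos : (0:ℝ) < triArea z0 z1 z2 / 12 := by
    unfold triArea
    have : (0:ℝ) < |det2 (z1 - z0) (z2 - z0)| := abs_pos.mpr hD
    positivity
  have key : ∀ w : ℝ × ℝ, triArea z0 z1 z2 / 12 * qh w ≤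
      (1 + μ) * (triArea z0 z1 z2 / 12 * qh (z1 - z0)) → qh w ≤ (1 + μ) * qh (z1 - z0) := by
    intro w hw
    have hrw : (1 + μ) * (triArea z0 z1 z2 / 12 * qh (z1 - z0)) =
        triArea z0 z1 z2 / 12 * ((1 + μ) * qh (z1 - z0)) := by ring
    rw [hrw] at hw
    exact le_of_mul_le_mul_left hw hApos
  have ha' : qh (z1 - z0) ≤ (1 + μ) * qh (z1 - z0) := by
    nlinarith [hconvq (z1 - z0), hμ]
  have hb' : qh (z2 - z1) ≤ (1 + μ) * qh (z1 - z0) :=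
    key _ (le_trans hb2.1 (le_trans hba hb1.2))
  have hc' : qh (z0 - z2) ≤ (1 + μ) * qh (z1 - z0) :=
    key _ (le_trans hb3.1 (le_trans hca hb1.2))
  exact max_le (max_le ha' hb') hc'
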